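/- Let X₁,…,Xₙ be i.i.d. {0,1}-valued Bernoulli random variables with success probability μₙ, let k(n)→∞ with βₙ := k(n)/n → β ∈ (0,1], and let q : {0,1} → (0,∞) satisfy n·μₙ(x)/k(n) → q(x) for x ∈ {0,1}. Then, as n → ∞, the empirical infection measure P₁^X satisfies a large deviation principle in the space 𝓜({0,1}) with speed n and good rate function β·I^β(ω) where I^β(ω) := H(ω/β ‖ q), i.e. β·I^β(ω) = Σ_{x∈{0,1}} [ ω(x) log( ω(x)/(β q(x)) ) − ω(x) + β q(x) ]. -/

import Mathlib

open Filter

namespace Pooling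

/-- the Bernoulli success-probability vector on `{0,1}`: `bern μ true = μ`, `bern μ false = 1-μ`. -/
def bern (μ : ℝ) : Bool → ℝ := fun x => if x then μ else 1 - μ

/-- probability weight of an i.i.d. Bernoulli(μ) configuration `x : Fin n → Bool`. -/
noncomputable def bernWeight (n : ℕ) (μ : ℝ) (x : Fin n → Bool) : ℝ :=
  ∏ i, bern μ (x i)

/-- the set of integer partitions of `n` into `k` positive parts (as ordered tuples). -/
def partitions (n k : ℕ) : Finset (Fin k → ℕ) :=
  (Fintype.piFinset fun _ : Fin k => Finset.range (n + 1)).filter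
    fun N => (∀ j, 0 < N j) ∧ ∑ j, N j = n

/-- the empirical infection measure `P₁^x` of the sample, as a measure on `{0,1} ≃ Bool`. -/
noncomputable def empInd (n : ℕ) (x : Fin n → Bool) : Bool → ℝ :=
  fun a => (n : ℝ)⁻¹ * ∑ i, if x i = a then 1 else 0

/-- the first index of pool `j`, when the pools have sizes `N 0, N 1, …` in order. -/
def poolStart {k : ℕ} (N : Fin k → ℕ) (j : Fin k) : ℕ :=
  ∑ r ∈ Finset.univ.filter (fun r => r < j), N r

/-- individual `i` belongs to pool `j`. -/
def inPool {n k : ℕ} (N : Fin k → ℕ) (j : Fin k) (i : Fin n) : Prop :=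
  poolStart N j ≤ (i : ℕ) ∧ (i : ℕ) < poolStart N j + N j

instance {n k : ℕ} (N : Fin k → ℕ) (j : Fin k) (i : Fin n) : Decidable (inPool N j i) :=
  inferInstanceAs (Decidable (_ ∧ _))

/-- the empirical measure `L_j` of pool `j`. -/
noncomputable def poolMeas {n k : ℕ} (x : Fin n → Bool) (N : Fin k → ℕ) (j : Fin k) :
    Bool → ℝ :=
  fun a => (N j : ℝ)⁻¹ * ∑ i, if inPool N j i ∧ x i = a then 1 else 0

open Classical in
/-- the empirical pool infection measure `P₂^{x,N}`, a measure on `ℕ × 𝓝({0,1})`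
(measures on `{0,1}` being represented as functions `Bool → ℝ`);
note `1/(n βₙ) = 1/k(n)`. -/
noncomputable def empPool {n k : ℕ} (x : Fin n → Bool) (N : Fin k → ℕ) :
    ℕ × (Bool → ℝ) → ℝ :=
  fun p => (k : ℝ)⁻¹ * ∑ j, if (N j, poolMeas x N j) = p then 1 else 0

/-- probability of the event `E` under the pooled-sample law `Pₙ`:
`X` is i.i.d. Bernoulli(μ) and, independently, `N` is uniform on the integer partitions of
`n` into `k` positive parts (this is exactly the law conditioned on all `N j ≠ 0` and
`N 0 + ⋯ + N (k-1) = n`). -/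
noncomputable def poolProb (n k : ℕ) (μ : ℝ)
    (E : Set ((Fin n → Bool) × (Fin k → ℕ))) : ℝ :=
  ((partitions n k).card : ℝ)⁻¹ *
    ∑ N ∈ partitions n k, ∑ x : Fin n → Bool,
      E.indicator (fun _ => bernWeight n μ x) (x, N)

/-- conditional probability `Pₙ(E ∣ C)` under the pooled-sample law. -/
noncomputable def condProb (n k : ℕ) (μ : ℝ)
    (E C : Set ((Fin n → Bool) × (Fin k → ℕ))) : ℝ :=
  poolProb n k μ (E ∩ C) / poolProb n k μ C

/-- extended-real logarithm, `elog 0 = ⊥`. -/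
noncomputable def elog (r : ℝ) : EReal := if r ≤ 0 then ⊥ else ((Real.log r : ℝ) : EReal)

/-- `P` (a sequence of laws, given by their values on all subsets of `𝒳`) satisfies a
large deviation principle with speed `n` and good rate function `J`. -/
def IsLDP {𝒳 : Type*} [TopologicalSpace 𝒳] (P : ℕ → Set 𝒳 → ℝ) (J : 𝒳 → EReal) : Prop :=
  LowerSemicontinuous J ∧
  (∀ c : ℝ, IsCompact {x | J x ≤ (c : EReal)}) ∧
  (∀ F : Set 𝒳, IsClosed F →
    Filter.limsup (fun n : ℕ => (((n : ℝ)⁻¹ : ℝ) : EReal) * elog (P n F)) Filter.atTop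
      ≤ -(⨅ x ∈ F, J x)) ∧
  (∀ G : Set 𝒳, IsOpen G →
    -(⨅ x ∈ G, J x) ≤
      Filter.liminf (fun n : ℕ => (((n : ℝ)⁻¹ : ℝ) : EReal) * elog (P n G)) Filter.atTop)

/-- `ω : Bool → ℝ` is a probability vector on `{0,1}`, i.e. an element of `𝓜({0,1})`. -/
def IsProbVec (ω : Bool → ℝ) : Prop := (∀ a, 0 ≤ ω a) ∧ ω false + ω true = 1

/-- `π` is (the mass function of) a probability measure on `ℕ × 𝓝({0,1})`, respecting the
convention that `ℓ = (0,0)` iff `m = 0`; i.e. an element of `𝓜(ℕ × 𝓝({0,1}))`. -/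
def IsPoolLaw (π : ℕ × (Bool → ℝ) → ℝ) : Prop :=
  (∀ p, 0 ≤ π p) ∧ HasSum π 1 ∧
    ∀ m ℓ, π (m, ℓ) ≠ 0 → ((m = 0 ∧ ℓ = fun _ => (0 : ℝ)) ∨ (m ≠ 0 ∧ IsProbVec ℓ))

/-- relative entropy `H(π ∥ φ)` of (discrete) probability measures. -/
noncomputable def relEnt {α : Type*} (π φ : α → ℝ) : ℝ :=
  ∑' a, π a * Real.log (π a / φ a)

/-- relative entropy `H(μ ∥ ν) = Σ_x [μ x log (μ x / ν x) - μ x + ν x]` of finite measures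
on `{0,1}`. -/
noncomputable def relEntFin (μ ν : Bool → ℝ) : ℝ :=
  ∑ a : Bool, (μ a * Real.log (μ a / ν a) - μ a + ν a)

/-- the measure `Φ_β^ω` on `ℕ × 𝓝({0,1})`:
`Φ_β^ω(m,ℓ) = (1 - e^{-1/β})⁻¹ ∏_x (ω x/β)^{m ℓ x} e^{-ω x/β} / (m ℓ x)!`
(with real powers and `Γ(z+1)` extending the factorial). -/
noncomputable def Phi (β : ℝ) (ω : Bool → ℝ) : ℕ × (Bool → ℝ) → ℝ :=
  fun p => (1 - Real.exp (-(1 / β)))⁻¹ *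
    ∏ a : Bool,
      (ω a / β) ^ ((p.1 : ℝ) * p.2 a) * Real.exp (-(ω a / β)) /
        Real.Gamma ((p.1 : ℝ) * p.2 a + 1)

/-- `⟨π⟩(a) = Σ_{(m,ℓ)} m ℓ(a) π(m,ℓ)`. -/
noncomputable def bracket (π : ℕ × (Bool → ℝ) → ℝ) : Bool → ℝ :=
  fun a => ∑' p : ℕ × (Bool → ℝ), (p.1 : ℝ) * p.2 a * π p


open Classical in
/-- the rate function of Theorem 2.4:
`β I^β(ω) = β H(ω/β ∥ q) = Σ_x [ω x log(ω x/(β q x)) - ω x + β q x]`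
(extended by `∞` off `𝓜({0,1})`). -/
noncomputable def rate3 (β : ℝ) (q : Bool → ℝ) (ω : Bool → ℝ) : EReal :=
  if IsProbVec ω then
    ((∑ a : Bool, (ω a * Real.log (ω a / (β * q a)) - ω a + β * q a) : ℝ) : EReal)
  else ⊤


section Aux
open Real

lemma step_up {n s j : ℕ} (hs : s ≤ n) (hj : j < s) :
    n.choose j * s ^ j * (n - s) ^ (n - j) ≤ n.choose (j+1) * s ^ (j+1) * (n - s) ^ (n - (j+1)) := by
  have h1 : n - j = (n - (j+1)) + 1 := by omega
  have key : n.choose j * (n - s) * (j+1) ≤ n.choose (j+1) * s * (j+1) := by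
    have h2 : n.choose (j+1) * (j+1) = n.choose j * (n - j) := Nat.choose_succ_right_eq n j
    calc n.choose j * (n - s) * (j+1) = n.choose j * ((n - s) * (j+1)) := by ring
      _ ≤ n.choose j * ((n - j) * s) := Nat.mul_le_mul_left _ (Nat.mul_le_mul (by omega) (by omega))
      _ = n.choose (j+1) * (j+1) * s := by rw [h2]; ring
      _ = n.choose (j+1) * s * (j+1) := by ring
  have key2 : n.choose j * (n - s) ≤ n.choose (j+1) * s := Nat.le_of_mul_le_mul_right key (by omega)
  calc n.choose j * s ^ j * (n - s) ^ (n - j)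
      = (n.choose j * (n - s)) * (s ^ j * (n - s) ^ (n - (j+1))) := by rw [h1]; ring
    _ ≤ (n.choose (j+1) * s) * (s ^ j * (n - s) ^ (n - (j+1))) := Nat.mul_le_mul_right _ key2
    _ = n.choose (j+1) * s ^ (j+1) * (n - s) ^ (n - (j+1)) := by ring

lemma step_down {n s j : ℕ} (hs : s ≤ j) (hj : j < n) :
    n.choose (j+1) * s ^ (j+1) * (n - s) ^ (n - (j+1)) ≤ n.choose j * s ^ j * (n - s) ^ (n - j) := by
  have h1 : n - j = (n - (j+1)) + 1 := by omega
  have key : n.choose (j+1) * s * (j+1) ≤ n.choose j * (n - s) * (j+1) := by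
    have h2 : n.choose (j+1) * (j+1) = n.choose j * (n - j) := Nat.choose_succ_right_eq n j
    calc n.choose (j+1) * s * (j+1) = n.choose (j+1) * (j+1) * s := by ring
      _ = n.choose j * ((n - j) * s) := by rw [h2]; ring
      _ ≤ n.choose j * ((n - s) * (j+1)) := Nat.mul_le_mul_left _ (Nat.mul_le_mul (by omega) (by omega))
      _ = n.choose j * (n - s) * (j+1) := by ring
  have key2 : n.choose (j+1) * s ≤ n.choose j * (n - s) := Nat.le_of_mul_le_mul_right key (by omega)
  calc n.choose (j+1) * s ^ (j+1) * (n - s) ^ (n - (j+1))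
      = (n.choose (j+1) * s) * (s ^ j * (n - s) ^ (n - (j+1))) := by ring
    _ ≤ (n.choose j * (n - s)) * (s ^ j * (n - s) ^ (n - (j+1))) := Nat.mul_le_mul_right _ key2
    _ = n.choose j * s ^ j * (n - s) ^ (n - j) := by rw [h1]; ring

lemma term_le_max {n s : ℕ} (hs : s ≤ n) : ∀ j, j ≤ n →
    n.choose j * s ^ j * (n - s) ^ (n - j) ≤ n.choose s * s ^ s * (n - s) ^ (n - s) := by
  have up : ∀ d j, j + d = s → n.choose j * s ^ j * (n - s) ^ (n - j) ≤ n.choose s * s ^ s * (n - s) ^ (n - s) := by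
    intro d
    induction d with
    | zero => intro j hj; simp [← hj]
    | succ d ih =>
      intro j hj
      exact le_trans (step_up hs (by omega)) (ih (j+1) (by omega))
  have down : ∀ d j, j = s + d → j ≤ n → n.choose j * s ^ j * (n - s) ^ (n - j) ≤ n.choose s * s ^ s * (n - s) ^ (n - s) := by
    intro d
    induction d with
    | zero => intro j hj _; simp [hj]
    | succ d ih =>
      intro j hj hjn
      have : j = (s + d) + 1 := by omega
      subst this
      exact le_trans (step_down (by omega) (by omega)) (ih (s+d) rfl (by omega))
  intro j hj
  rcases le_or_gt j s with h | h
  · exact up (s - j) j (by omega)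
  · exact down (j - s) j (by omega) hj

lemma npow_le_choose {n s : ℕ} (hs : s ≤ n) :
    n ^ n ≤ (n + 1) * (n.choose s * s ^ s * (n - s) ^ (n - s)) := by
  have expand : (s + (n - s)) ^ n = ∑ m ∈ Finset.range (n + 1), s ^ m * (n - s) ^ (n - m) * n.choose m :=
    add_pow s (n - s) n
  have hsum : n ^ n = ∑ m ∈ Finset.range (n + 1), n.choose m * s ^ m * (n - s) ^ (n - m) := by
    rw [show s + (n - s) = n by omega] at expand
    rw [expand]; apply Finset.sum_congr rfl; intro m _; ring
  rw [hsum]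
  calc ∑ m ∈ Finset.range (n + 1), n.choose m * s ^ m * (n - s) ^ (n - m)
      ≤ ∑ _m ∈ Finset.range (n + 1), n.choose s * s ^ s * (n - s) ^ (n - s) := by
        apply Finset.sum_le_sum
        intro m hm
        exact term_le_max hs m (by simpa using Nat.lt_succ_iff.mp (Finset.mem_range.mp hm))
    _ = (n + 1) * (n.choose s * s ^ s * (n - s) ^ (n - s)) := by
        rw [Finset.sum_const, Finset.card_range]; ring

lemma choose_le_npow {n s : ℕ} (hs : s ≤ n) :
    n.choose s * s ^ s * (n - s) ^ (n - s) ≤ n ^ n := by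
  have expand : (s + (n - s)) ^ n = ∑ m ∈ Finset.range (n + 1), s ^ m * (n - s) ^ (n - m) * n.choose m :=
    add_pow s (n - s) n
  have hsum : n ^ n = ∑ m ∈ Finset.range (n + 1), n.choose m * s ^ m * (n - s) ^ (n - m) := by
    rw [show s + (n - s) = n by omega] at expand
    rw [expand]; apply Finset.sum_congr rfl; intro m _; ring
  rw [hsum]
  have := Finset.single_le_sum (f := fun m => n.choose m * s ^ m * (n - s) ^ (n - m))
    (fun m _ => Nat.zero_le _) (Finset.mem_range.mpr (Nat.lt_succ_of_le hs))
  exact this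

noncomputable def Kf (p t : ℝ) : ℝ :=
  t * Real.log t + (1-t) * Real.log (1-t) - t * Real.log p - (1-t) * Real.log (1-p)

lemma Kf_cont (p : ℝ) : Continuous (Kf p) := by unfold Kf; fun_prop

lemma Kf_nonneg {p t : ℝ} (hp0 : 0 < p) (hp1 : p < 1) (ht0 : 0 ≤ t) (ht1 : t ≤ 1) :
    0 ≤ Kf p t := by
  have key : ∀ u q : ℝ, 0 ≤ u → 0 < q → u - q ≤ u * Real.log u - u * Real.log q := by
    intro u q hu hq
    rcases eq_or_lt_of_le hu with h | h
    · simp [← h]; positivity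
    · have hlog : Real.log (q / u) ≤ q / u - 1 := Real.log_le_sub_one_of_pos (by positivity)
      have : Real.log (q / u) = Real.log q - Real.log u := Real.log_div (ne_of_gt hq) (ne_of_gt h)
      rw [this] at hlog
      have := mul_le_mul_of_nonneg_left hlog hu
      rw [mul_sub, mul_sub] at this
      have hqu : u * (q / u) = q := by field_simp
      nlinarith
  have h1 := key t p ht0 hp0
  have h2 := key (1-t) (1-p) (by linarith) (by linarith)
  unfold Kf
  nlinarith

lemma nKf_eq (p : ℝ) {n s : ℕ} (hn : 0 < n) (hs : s ≤ n) :
    (n:ℝ) * Kf p ((s:ℝ)/n) =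
      (s:ℝ) * Real.log s + ((n-s:ℕ):ℝ) * Real.log ((n-s:ℕ):ℝ)
        - (n:ℝ) * Real.log n - (s:ℝ) * Real.log p - ((n-s:ℕ):ℝ) * Real.log (1-p) := by
  have hn' : (0:ℝ) < n := by exact_mod_cast hn
  set a : ℝ := (s:ℝ) with ha
  set b : ℝ := ((n-s:ℕ):ℝ) with hb
  have hab : a + b = n := by rw [ha, hb]; push_cast [Nat.cast_sub hs]; ring
  have h1t : 1 - a/n = b/n := by field_simp; linarith
  have expand : ∀ c : ℝ, 0 ≤ c → c/n * Real.log (c/n) = (c * Real.log c - c * Real.log n)/n := by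
    intro c hc
    rcases eq_or_lt_of_le hc with h | h
    · simp [← h]
    · rw [Real.log_div (ne_of_gt h) (ne_of_gt hn')]; ring
  have hA : 0 ≤ a := by positivity
  have hB : 0 ≤ b := by positivity
  unfold Kf
  rw [h1t, expand a hA, expand b hB]
  field_simp
  linear_combination (-Real.log (n:ℝ)) * hab

lemma log_prod_eq {n s : ℕ} (hs : s ≤ n) :
    Real.log ((n.choose s * s ^ s * (n - s) ^ (n - s) : ℕ) : ℝ)
      = Real.log (n.choose s : ℝ) + (s:ℝ) * Real.log s + ((n-s:ℕ):ℝ) * Real.log ((n-s:ℕ):ℝ) := by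
  have hc : ((n.choose s : ℕ):ℝ) ≠ 0 := by
    have := Nat.choose_pos hs
    positivity
  have hss : ((s ^ s : ℕ):ℝ) ≠ 0 := by
    rcases Nat.eq_zero_or_pos s with h | h
    · simp [h]
    · positivity
  have hns : (((n - s) ^ (n - s) : ℕ):ℝ) ≠ 0 := by
    rcases Nat.eq_zero_or_pos (n - s) with h | h
    · simp [h]
    · have : (0:ℝ) < ((n - s:ℕ):ℝ) := by exact_mod_cast h
      push_cast
      positivity
  push_cast
  rw [Real.log_mul (by push_cast at hc hss ⊢; positivity) (by push_cast at hns ⊢; exact hns),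
      Real.log_mul (by push_cast at hc ⊢; exact hc) (by push_cast at hss ⊢; exact hss),
      Real.log_pow, Real.log_pow]

lemma log_choose_le {n s : ℕ} (hs : s ≤ n) :
    Real.log (n.choose s : ℝ) ≤
      (n:ℝ) * Real.log n - (s:ℝ) * Real.log s - ((n-s:ℕ):ℝ) * Real.log ((n-s:ℕ):ℝ) := by
  have h := choose_le_npow hs
  have h1 : ((n.choose s * s ^ s * (n - s) ^ (n - s) : ℕ) : ℝ) ≤ ((n ^ n : ℕ):ℝ) := by exact_mod_cast h
  have hpos : (0:ℝ) < ((n.choose s * s ^ s * (n - s) ^ (n - s) : ℕ) : ℝ) := by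
    have : 0 < n.choose s * s ^ s * (n - s) ^ (n - s) := by
      apply Nat.mul_pos (Nat.mul_pos (Nat.choose_pos hs) _) _
      · rcases Nat.eq_zero_or_pos s with h' | h' <;> simp [h'] <;> positivity
      · rcases Nat.eq_zero_or_pos (n - s) with h' | h' <;> simp [h'] <;> positivity
    exact_mod_cast this
  have := Real.log_le_log hpos h1
  rw [log_prod_eq hs] at this
  have hnn : Real.log ((n ^ n : ℕ):ℝ) = (n:ℝ) * Real.log n := by push_cast; exact Real.log_pow n n
  rw [hnn] at this
  linarith

lemma log_choose_ge {n s : ℕ} (hs : s ≤ n) :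
    (n:ℝ) * Real.log n - (s:ℝ) * Real.log s - ((n-s:ℕ):ℝ) * Real.log ((n-s:ℕ):ℝ)
      - Real.log ((n:ℝ) + 1) ≤ Real.log (n.choose s : ℝ) := by
  have h := npow_le_choose hs
  have h1 : ((n ^ n : ℕ):ℝ) ≤ (((n+1) * (n.choose s * s ^ s * (n - s) ^ (n - s)) : ℕ) : ℝ) := by
    exact_mod_cast h
  rcases Nat.eq_zero_or_pos n with hn | hn
  · subst hn
    interval_cases s
    simp
  have hpos : (0:ℝ) < ((n ^ n : ℕ):ℝ) := by
    have : 0 < n ^ n := by positivity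
    exact_mod_cast this
  have hlog := Real.log_le_log hpos h1
  have hsplit : Real.log ((((n+1) * (n.choose s * s ^ s * (n - s) ^ (n - s)) : ℕ)) : ℝ)
      = Real.log ((n:ℝ)+1) + Real.log ((n.choose s * s ^ s * (n - s) ^ (n - s) : ℕ) : ℝ) := by
    have h2 : (0:ℝ) < ((n.choose s * s ^ s * (n - s) ^ (n - s) : ℕ) : ℝ) := by
      have : 0 < n.choose s * s ^ s * (n - s) ^ (n - s) := by
        apply Nat.mul_pos (Nat.mul_pos (Nat.choose_pos hs) _) _
        · rcases Nat.eq_zero_or_pos s with h' | h' <;> simp [h'] <;> positivity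
        · rcases Nat.eq_zero_or_pos (n - s) with h' | h' <;> simp [h'] <;> positivity
      exact_mod_cast this
    rw [Nat.cast_mul, Real.log_mul (by positivity) (ne_of_gt h2)]
    push_cast
    ring_nf
  rw [hsplit, log_prod_eq hs] at hlog
  have hnn : Real.log ((n ^ n : ℕ):ℝ) = (n:ℝ) * Real.log n := by push_cast; exact Real.log_pow n n
  rw [hnn] at hlog
  linarith

noncomputable def wB (μ : ℝ) (n s : ℕ) : ℝ := (n.choose s : ℝ) * μ ^ s * (1-μ) ^ (n - s)

noncomputable def del (p μ : ℝ) : ℝ :=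
  |Real.log μ - Real.log p| + |Real.log (1-μ) - Real.log (1-p)|

lemma wB_pos {μ : ℝ} (hμ0 : 0 < μ) (hμ1 : μ < 1) {n s : ℕ} (hs : s ≤ n) : 0 < wB μ n s := by
  have := Nat.choose_pos hs
  have h1 : (0:ℝ) < 1 - μ := by linarith
  have h2 : (0:ℝ) < (n.choose s : ℝ) := by exact_mod_cast this
  unfold wB; positivity

lemma wB_nonneg {μ : ℝ} (hμ0 : 0 ≤ μ) (hμ1 : μ ≤ 1) (n s : ℕ) : 0 ≤ wB μ n s := by
  have h1 : (0:ℝ) ≤ 1 - μ := by linarith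
  unfold wB; positivity

lemma log_wB_eq {μ : ℝ} (hμ0 : 0 < μ) (hμ1 : μ < 1) {n s : ℕ} (hs : s ≤ n) :
    Real.log (wB μ n s) = Real.log (n.choose s : ℝ)
      + (s:ℝ) * Real.log μ + ((n-s:ℕ):ℝ) * Real.log (1-μ) := by
  have h1 : (0:ℝ) < 1 - μ := by linarith
  have h2 : (0:ℝ) < (n.choose s : ℝ) := by exact_mod_cast Nat.choose_pos hs
  unfold wB
  rw [Real.log_mul (by positivity) (by positivity), Real.log_mul (by positivity) (by positivity),
    Real.log_pow, Real.log_pow]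

lemma abs_bound {x : ℝ} {c n : ℝ} (hc0 : 0 ≤ c) (hcn : c ≤ n) :
    c * x ≤ n * |x| ∧ -(n * |x|) ≤ c * x := by
  constructor
  · nlinarith [le_abs_self x, abs_nonneg x]
  · nlinarith [neg_abs_le x, abs_nonneg x]

lemma log_wB_le {μ p : ℝ} (hμ0 : 0 < μ) (hμ1 : μ < 1) {n s : ℕ} (hn : 0 < n) (hs : s ≤ n) :
    Real.log (wB μ n s) ≤ (n:ℝ) * del p μ - (n:ℝ) * Kf p ((s:ℝ)/n) := by
  have e := nKf_eq p hn hs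
  have hc := log_choose_le hs
  have heq := log_wB_eq hμ0 hμ1 hs
  have hs' : (s:ℝ) ≤ n := by exact_mod_cast hs
  have hb' : ((n-s:ℕ):ℝ) ≤ n := by exact_mod_cast Nat.sub_le n s
  have e1 := (abs_bound (x := Real.log μ - Real.log p) (Nat.cast_nonneg s) hs').1
  have e2 := (abs_bound (x := Real.log (1-μ) - Real.log (1-p)) (Nat.cast_nonneg (n-s)) hb').1
  unfold del
  nlinarith [e1, e2]

lemma log_wB_ge {μ p : ℝ} (hμ0 : 0 < μ) (hμ1 : μ < 1) {n s : ℕ} (hn : 0 < n) (hs : s ≤ n) :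
    -(n:ℝ) * del p μ - (n:ℝ) * Kf p ((s:ℝ)/n) - Real.log ((n:ℝ)+1) ≤ Real.log (wB μ n s) := by
  have e := nKf_eq p hn hs
  have hc := log_choose_ge hs
  have heq := log_wB_eq hμ0 hμ1 hs
  have hs' : (s:ℝ) ≤ n := by exact_mod_cast hs
  have hb' : ((n-s:ℕ):ℝ) ≤ n := by exact_mod_cast Nat.sub_le n s
  have e1 := (abs_bound (x := Real.log μ - Real.log p) (Nat.cast_nonneg s) hs').2
  have e2 := (abs_bound (x := Real.log (1-μ) - Real.log (1-p)) (Nat.cast_nonneg (n-s)) hb').2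
  unfold del
  nlinarith [e1, e2]
noncomputable def nuvec (n s : ℕ) : Bool → ℝ :=
  fun a => if a then (s:ℝ)/n else ((n-s:ℕ):ℝ)/n

def cnt {n : ℕ} (x : Fin n → Bool) : ℕ := (Finset.univ.filter fun i => x i = true).card

lemma cnt_le {n : ℕ} (x : Fin n → Bool) : cnt x ≤ n := by
  simpa [cnt] using Finset.card_filter_le Finset.univ (fun i => x i = true)

lemma empInd_eq {n : ℕ} (x : Fin n → Bool) : empInd n x = nuvec n (cnt x) := by
  funext a
  unfold empInd nuvec
  rw [Finset.sum_boole]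
  cases a with
  | true => simp [cnt, div_eq_inv_mul]
  | false =>
    have h1 : (Finset.univ.filter fun i => x i = false) =
        (Finset.univ.filter fun i => ¬ (x i = true)) := by
      apply Finset.filter_congr; intro i _; cases x i <;> simp
    have h2 := Finset.card_filter_add_card_filter_not (s := (Finset.univ : Finset (Fin n)))
      (fun i => x i = true)
    simp only [Finset.card_univ, Fintype.card_fin] at h2
    have h3 : (Finset.univ.filter fun i => x i = false).card = n - cnt x := by
      rw [h1]; unfold cnt; omega
    simp only [if_false, Bool.false_eq_true]
    rw [h3, div_eq_inv_mul]

lemma bernWeight_eq {n : ℕ} (μ : ℝ) (x : Fin n → Bool) :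
    bernWeight n μ x = μ ^ (cnt x) * (1-μ) ^ (n - cnt x) := by
  unfold bernWeight bern
  rw [Finset.prod_ite (fun _ => μ) (fun _ => 1 - μ)]
  rw [Finset.prod_const, Finset.prod_const]
  have h2 := Finset.card_filter_add_card_filter_not (s := (Finset.univ : Finset (Fin n)))
    (fun i => x i = true)
  simp only [Finset.card_univ, Fintype.card_fin] at h2
  have e1 : (Finset.univ.filter fun i => (x i : Prop)) = (Finset.univ.filter fun i => x i = true) := by
    apply Finset.filter_congr; intro i _; simp
  have e2 : (Finset.univ.filter fun i => ¬ (x i : Prop)) = (Finset.univ.filter fun i => ¬ x i = true) := by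
    apply Finset.filter_congr; intro i _; simp
  rw [e1, e2]
  have h3 : (Finset.univ.filter fun i => ¬ x i = true).card = n - cnt x := by unfold cnt; omega
  rw [h3]
  rfl

lemma fiber_card (n s : ℕ) :
    (Finset.univ.filter fun x : Fin n → Bool => cnt x = s).card = n.choose s := by
  have hc := Finset.card_powersetCard s (Finset.univ : Finset (Fin n))
  simp only [Finset.card_univ, Fintype.card_fin] at hc
  rw [← hc]
  refine Finset.card_bij' (fun x _ => Finset.univ.filter fun i => x i = true)
    (fun S _ => fun i => decide (i ∈ S)) ?hi ?hj ?li ?ri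
  case hi =>
    intro x hx
    rw [Finset.mem_powersetCard]
    exact ⟨Finset.filter_subset _ _, (Finset.mem_filter.mp hx).2⟩
  case hj =>
    intro S hS
    rw [Finset.mem_filter]
    refine ⟨Finset.mem_univ _, ?_⟩
    have h : (Finset.univ.filter fun i => decide (i ∈ S) = true) = S := by ext i; simp
    unfold cnt
    rw [h]
    exact (Finset.mem_powersetCard.mp hS).2
  case li => intro x hx; funext i; simp
  case ri => intro S hS; ext i; simp

lemma sum_reduce (n : ℕ) (μ : ℝ) (A : Set (Bool → ℝ)) :
    (∑ x : Fin n → Bool, A.indicator (fun _ => bernWeight n μ x) (empInd n x))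
      = ∑ s ∈ Finset.range (n+1), A.indicator (fun _ => wB μ n s) (nuvec n s) := by
  have step1 : ∀ x : Fin n → Bool,
      A.indicator (fun _ => bernWeight n μ x) (empInd n x)
        = A.indicator (fun _ => μ ^ (cnt x) * (1-μ) ^ (n - cnt x)) (nuvec n (cnt x)) := by
    intro x
    rw [empInd_eq, bernWeight_eq]
  calc (∑ x : Fin n → Bool, A.indicator (fun _ => bernWeight n μ x) (empInd n x))
      = ∑ x : Fin n → Bool,
          A.indicator (fun _ => μ ^ (cnt x) * (1-μ) ^ (n - cnt x)) (nuvec n (cnt x)) :=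
        Finset.sum_congr rfl (fun x _ => step1 x)
    _ = ∑ s ∈ Finset.range (n+1), ∑ x ∈ Finset.univ.filter (fun x : Fin n → Bool => cnt x = s),
          A.indicator (fun _ => μ ^ (cnt x) * (1-μ) ^ (n - cnt x)) (nuvec n (cnt x)) :=
        (Finset.sum_fiberwise_of_maps_to
          (fun x _ => Finset.mem_range.mpr (Nat.lt_succ_of_le (cnt_le x))) _).symm
    _ = ∑ s ∈ Finset.range (n+1), A.indicator (fun _ => wB μ n s) (nuvec n s) := by
        apply Finset.sum_congr rfl
        intro s _
        have hinner : ∀ x ∈ Finset.univ.filter (fun x : Fin n → Bool => cnt x = s),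
            A.indicator (fun _ => μ ^ (cnt x) * (1-μ) ^ (n - cnt x)) (nuvec n (cnt x))
              = A.indicator (fun _ => μ ^ s * (1-μ) ^ (n - s)) (nuvec n s) := by
          intro x hx
          rw [(Finset.mem_filter.mp hx).2]
        rw [Finset.sum_congr rfl hinner, Finset.sum_const, fiber_card]
        by_cases hA : nuvec n s ∈ A
        · simp [Set.indicator_of_mem hA, wB, nsmul_eq_mul, mul_assoc]
        · simp [Set.indicator_of_notMem hA]


lemma elog_mono : Monotone elog := by
  intro a b h
  unfold elog
  split_ifs with ha hb hb
  · exact bot_le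
  · exact bot_le
  · exact absurd (le_trans h hb) ha
  · exact EReal.coe_le_coe_iff.mpr (Real.log_le_log (not_le.mp ha) h)

lemma elog_of_pos {r : ℝ} (h : 0 < r) : elog r = ((Real.log r : ℝ) : EReal) :=
  if_neg (not_le.mpr h)

lemma coe_mul_le {c r : ℝ} (hc : 0 < c) {x : EReal} (h : x ≤ (r : EReal)) :
    (c : EReal) * x ≤ ((c * r : ℝ) : EReal) := by
  induction x using EReal.rec with
  | bot =>
    rw [EReal.mul_bot_of_pos (by exact_mod_cast hc)]
    exact bot_le
  | coe y =>
    rw [← EReal.coe_mul]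
    exact EReal.coe_le_coe_iff.mpr
      (mul_le_mul_of_nonneg_left (EReal.coe_le_coe_iff.mp h) hc.le)
  | top => exact absurd h (by simp)

lemma nuvec_prob {n s : ℕ} (hn : 0 < n) (hs : s ≤ n) : IsProbVec (nuvec n s) := by
  have hn' : (0:ℝ) < n := by exact_mod_cast hn
  constructor
  · intro a; cases a <;> · unfold nuvec; positivity
  · show (if (false : Bool) then (s:ℝ)/n else ((n-s:ℕ):ℝ)/n) + (if (true : Bool) then (s:ℝ)/n else ((n-s:ℕ):ℝ)/n) = 1
    rw [if_neg (by simp), if_pos rfl, ← add_div, div_eq_one_iff_eq (ne_of_gt hn')]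
    push_cast [Nat.cast_sub hs]
    ring

lemma probVec_closed : IsClosed {ω : Bool → ℝ | IsProbVec ω} := by
  have : {ω : Bool → ℝ | IsProbVec ω}
      = (⋂ a : Bool, {ω : Bool → ℝ | 0 ≤ ω a}) ∩ {ω : Bool → ℝ | ω false + ω true = 1} := by
    ext ω; simp [IsProbVec, Set.mem_iInter]
  rw [this]
  exact IsClosed.inter
    (isClosed_iInter fun a => isClosed_le continuous_const (continuous_apply a))
    (isClosed_eq ((continuous_apply false).add (continuous_apply true)) continuous_const)

lemma mul_log_div_eq {x y : ℝ} (hx : 0 ≤ x) (hy : 0 < y) :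
    x * Real.log (x / y) = x * Real.log x - x * Real.log y := by
  rcases eq_or_lt_of_le hx with h | h
  · simp [← h]
  · rw [Real.log_div (ne_of_gt h) (ne_of_gt hy)]; ring

end Aux

/-- Theorem 2.4: the empirical infection measure `P₁^X` satisfies an LDP with speed `n`
and good rate function `β I^β(ω) = β H(ω/β ∥ q)`. -/
theorem statement3
    (μ : ℕ → ℝ) (hμ : ∀ n, μ n ∈ Set.Icc (0 : ℝ) 1)
    (k : ℕ → ℕ) (hk : Tendsto k atTop atTop)
    (β : ℝ) (hβ : β ∈ Set.Ioc (0 : ℝ) 1)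
    (hβn : Tendsto (fun n => (k n : ℝ) / n) atTop (nhds β))
    (q : Bool → ℝ) (hq : ∀ a, 0 < q a)
    (hq' : ∀ a, Tendsto (fun n : ℕ => (n : ℝ) * bern (μ n) a / (k n)) atTop (nhds (q a))) :
    IsLDP
      (fun n (A : Set (Bool → ℝ)) =>
        ∑ x : Fin n → Bool, A.indicator (fun _ => bernWeight n (μ n) x) (empInd n x))
      (rate3 β q) := by
  classical
  -- notation
  set p := β * q true with hp_def
  have hp0 : 0 < p := mul_pos hβ.1 (hq true)
  have hqf0 : 0 < β * q false := mul_pos hβ.1 (hq false)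
  -- μ n → p
  have hev : ∀ᶠ n : ℕ in atTop, 0 < n ∧ 0 < k n :=
    (eventually_gt_atTop 0).and (hk.eventually_gt_atTop 0)
  have hμt : Tendsto μ atTop (nhds p) := by
    have h1 : Tendsto (fun n : ℕ => ((n:ℝ) * bern (μ n) true / k n) * ((k n : ℝ)/n)) atTop
        (nhds (q true * β)) := (hq' true).mul hβn
    rw [show q true * β = p by rw [hp_def]; ring] at h1
    apply Filter.Tendsto.congr' _ h1
    filter_upwards [hev] with n hn
    have hn0 : ((n:ℝ)) ≠ 0 := by
      have : (0:ℝ) < n := by exact_mod_cast hn.1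
      exact ne_of_gt this
    have hk0 : ((k n:ℝ)) ≠ 0 := by
      have : (0:ℝ) < k n := by exact_mod_cast hn.2
      positivity
    show (n:ℝ) * bern (μ n) true / k n * ((k n:ℝ)/n) = μ n
    have hb : bern (μ n) true = μ n := rfl
    rw [hb]; field_simp
  have hμt' : Tendsto (fun n => 1 - μ n) atTop (nhds (β * q false)) := by
    have h1 : Tendsto (fun n : ℕ => ((n:ℝ) * bern (μ n) false / k n) * ((k n : ℝ)/n)) atTop
        (nhds (q false * β)) := (hq' false).mul hβn
    rw [show q false * β = β * q false by ring] at h1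
    apply Filter.Tendsto.congr' _ h1
    filter_upwards [hev] with n hn
    have hn0 : ((n:ℝ)) ≠ 0 := by
      have : (0:ℝ) < n := by exact_mod_cast hn.1
      exact ne_of_gt this
    have hk0 : ((k n:ℝ)) ≠ 0 := by
      have : (0:ℝ) < k n := by exact_mod_cast hn.2
      positivity
    show (n:ℝ) * bern (μ n) false / k n * ((k n:ℝ)/n) = 1 - μ n
    have hb : bern (μ n) false = 1 - μ n := rfl
    rw [hb]; field_simp
  have h1p : 1 - p = β * q false :=
    tendsto_nhds_unique (tendsto_const_nhds.sub hμt) hμt'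
  have hp1 : p < 1 := by nlinarith
  -- rate function facts
  have rate_eq : ∀ ω : Bool → ℝ, IsProbVec ω → rate3 β q ω = ((Kf p (ω true) : ℝ) : EReal) := by
    intro ω hω
    unfold rate3
    rw [if_pos hω]
    congr 1
    have hω1 : ω false = 1 - ω true := by have := hω.2; linarith
    rw [Fintype.sum_bool]
    rw [mul_log_div_eq (hω.1 true) hp0, mul_log_div_eq (hω.1 false) hqf0]
    rw [hω1, ← hp_def, ← h1p]
    have hl : Real.log (β * q false) = Real.log (1 - p) := by rw [← h1p]
    unfold Kf
    ring
  have rate_top : ∀ ω : Bool → ℝ, ¬ IsProbVec ω → rate3 β q ω = ⊤ := by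
    intro ω hω; unfold rate3; rw [if_neg hω]
  have mem_Icc_of_prob : ∀ ω : Bool → ℝ, IsProbVec ω → 0 ≤ ω true ∧ ω true ≤ 1 := by
    intro ω hω
    refine ⟨hω.1 true, ?_⟩
    have := hω.1 false
    have := hω.2
    linarith
  have rate_ge : ∀ ω : Bool → ℝ, ((Kf p (ω true) : ℝ) : EReal) ≤ rate3 β q ω := by
    intro ω
    by_cases hω : IsProbVec ω
    · rw [rate_eq ω hω]
    · rw [rate_top ω hω]; exact le_top
  have rate_nonneg : ∀ ω : Bool → ℝ, (0 : EReal) ≤ rate3 β q ω := by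
    intro ω
    by_cases hω : IsProbVec ω
    · rw [rate_eq ω hω]
      have h := mem_Icc_of_prob ω hω
      exact_mod_cast Kf_nonneg hp0 hp1 h.1 h.2
    · rw [rate_top ω hω]; exact le_top
  -- eventually μ n ∈ (0,1)
  have hμIoo : ∀ᶠ n : ℕ in atTop, μ n ∈ Set.Ioo (0:ℝ) 1 :=
    hμt.eventually_mem (Ioo_mem_nhds hp0 hp1)
  -- δ n → 0
  have hlμ : Tendsto (fun n => Real.log (μ n)) atTop (nhds (Real.log p)) :=
    ((Real.continuousAt_log (ne_of_gt hp0)).tendsto).comp hμt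
  have hl1μ : Tendsto (fun n => Real.log (1 - μ n)) atTop (nhds (Real.log (1-p))) := by
    have h2 : Tendsto (fun n => 1 - μ n) atTop (nhds (1-p)) := tendsto_const_nhds.sub hμt
    exact ((Real.continuousAt_log (by linarith : (1:ℝ)-p ≠ 0)).tendsto).comp h2
  have hδ : Tendsto (fun n => del p (μ n)) atTop (nhds 0) := by
    have h1 : Tendsto (fun n => |Real.log (μ n) - Real.log p|) atTop (nhds 0) := by
      have := (hlμ.sub (tendsto_const_nhds (x := Real.log p))).abs
      simpa using this
    have h2 : Tendsto (fun n => |Real.log (1 - μ n) - Real.log (1-p)|) atTop (nhds 0) := by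
      have := (hl1μ.sub (tendsto_const_nhds (x := Real.log (1-p)))).abs
      simpa using this
    have := h1.add h2
    simpa [del] using this
  -- log(n+1)/n → 0
  have hlogdiv : Tendsto (fun n : ℕ => Real.log ((n:ℝ)+1) / n) atTop (nhds 0) := by
    have h0 : Tendsto (fun x : ℝ => Real.log x / x) atTop (nhds 0) := by
      have := Real.isLittleO_log_id_atTop.tendsto_div_nhds_zero
      simpa using this
    have h1 : Tendsto (fun n : ℕ => (n:ℝ)+1) atTop atTop :=
      tendsto_atTop_add_const_right _ 1 tendsto_natCast_atTop_atTop
    have h2 := h0.comp h1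
    have h3 : Tendsto (fun n : ℕ => 2 * (Real.log ((n:ℝ)+1) / ((n:ℝ)+1))) atTop (nhds 0) := by
      have := h2.const_mul (2:ℝ)
      simpa using this
    apply tendsto_of_tendsto_of_tendsto_of_le_of_le' tendsto_const_nhds h3
    · filter_upwards [eventually_ge_atTop 1] with n hn
      have hn1 : (1:ℝ) ≤ (n:ℝ) := by exact_mod_cast hn
      exact div_nonneg (Real.log_nonneg (by linarith)) (by linarith)
    · filter_upwards [eventually_ge_atTop 1] with n hn
      have hn1 : (1:ℝ) ≤ (n:ℝ) := by exact_mod_cast hn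
      have hl0 : 0 ≤ Real.log ((n:ℝ)+1) := Real.log_nonneg (by linarith)
      rw [mul_div_assoc'] 
      rw [div_le_div_iff₀ (by linarith) (by linarith)]
      nlinarith
  refine ⟨?lsc, ?cpt, ?upper, ?lower⟩

  case lsc =>
    intro ω
    by_cases hω : IsProbVec ω
    · intro y hy
      rw [rate_eq ω hω] at hy
      induction y using EReal.rec with
      | bot =>
        filter_upwards with ω'
        exact lt_of_lt_of_le (EReal.bot_lt_coe _) (rate_ge ω')
      | coe y0 =>
        have hy0 : y0 < Kf p (ω true) := EReal.coe_lt_coe_iff.mp hy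
        have hcont : ContinuousAt (fun ω' : Bool → ℝ => Kf p (ω' true)) ω :=
          (((Kf_cont p).comp (continuous_apply true)).continuousAt)
        have hev2 := hcont.eventually_const_lt hy0
        filter_upwards [hev2] with ω' h'
        exact lt_of_lt_of_le (EReal.coe_lt_coe_iff.mpr h') (rate_ge ω')
      | top => exact absurd hy not_top_lt
    · intro y hy
      have hmem : ω ∈ {ω' : Bool → ℝ | IsProbVec ω'}ᶜ := hω
      filter_upwards [probVec_closed.isOpen_compl.mem_nhds hmem] with ω' h'
      rw [rate_top ω' h']
      rw [rate_top ω hω] at hy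
      exact hy
  case cpt =>
    intro c
    have hset : {ω : Bool → ℝ | rate3 β q ω ≤ (c:EReal)}
        = (fun t : ℝ => fun a : Bool => if a then t else 1 - t) ''
          (Set.Icc (0:ℝ) 1 ∩ Kf p ⁻¹' Set.Iic c) := by
      ext ω
      constructor
      · intro hωc
        simp only [Set.mem_setOf_eq] at hωc
        by_cases hω : IsProbVec ω
        · refine ⟨ω true, ⟨Set.mem_Icc.mpr ⟨(mem_Icc_of_prob ω hω).1, (mem_Icc_of_prob ω hω).2⟩, ?_⟩, ?_⟩
          · rw [rate_eq ω hω] at hωc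
            exact Set.mem_Iic.mpr (EReal.coe_le_coe_iff.mp hωc)
          · funext a
            cases a
            · have := hω.2; simp only [Bool.false_eq_true, if_false]; linarith
            · simp
        · rw [rate_top ω hω] at hωc
          exact absurd (lt_of_le_of_lt hωc (EReal.coe_lt_top c)) (lt_irrefl _)
      · rintro ⟨t, ⟨⟨ht0, ht1⟩, htc⟩, rfl⟩
        have hprob : IsProbVec (fun a : Bool => if a then t else 1 - t) := by
          constructor
          · intro a; cases a
            · simp only [Bool.false_eq_true, if_false]; linarith
            · simp only [if_true]; exact ht0
          · simp
        simp only [Set.mem_setOf_eq]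
        rw [rate_eq _ hprob]
        exact EReal.coe_le_coe_iff.mpr (by simpa using htc)
    rw [hset]
    apply IsCompact.image
    · exact isCompact_Icc.inter_right (IsClosed.preimage (Kf_cont p) isClosed_Iic)
    · refine continuous_pi (fun a => ?_)
      cases a
      · simp only [Bool.false_eq_true, if_false]; exact continuous_const.sub continuous_id
      · simp only [if_true]; exact continuous_id

  case upper =>
    intro F _hF
    by_cases hJtop : (⨅ ω ∈ F, rate3 β q ω) = ⊤
    · have hnop : ∀ ω ∈ F, ¬ IsProbVec ω := by
        intro ω hωF hprob
        have h1 : rate3 β q ω = ⊤ := iInf_eq_top.mp (iInf_eq_top.mp hJtop ω) hωF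
        rw [rate_eq ω hprob] at h1
        exact (EReal.coe_ne_top _) h1
      have hev0 : ∀ᶠ n : ℕ in atTop,
          (((n:ℝ)⁻¹ : ℝ) : EReal) *
            elog (∑ x : Fin n → Bool, F.indicator (fun _ => bernWeight n (μ n) x) (empInd n x))
            ≤ (⊥ : EReal) := by
        filter_upwards [eventually_gt_atTop 0] with n hn
        have hPz : (∑ x : Fin n → Bool,
            F.indicator (fun _ => bernWeight n (μ n) x) (empInd n x)) = 0 := by
          apply Finset.sum_eq_zero
          intro x _
          apply Set.indicator_of_notMem
          intro hmem
          exact hnop _ hmem (empInd_eq x ▸ nuvec_prob hn (cnt_le x))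
        rw [hPz]
        have he0 : elog 0 = ⊥ := if_pos le_rfl
        have hmb := EReal.mul_bot_of_pos (x := (((n:ℝ)⁻¹ : ℝ) : EReal))
          (by exact_mod_cast inv_pos.mpr (show (0:ℝ) < n by exact_mod_cast hn))
        rw [he0, hmb]
      rw [hJtop, EReal.neg_top]
      exact Filter.limsup_le_of_le (by isBoundedDefault) hev0
    · have hJ0 : (0:EReal) ≤ ⨅ ω ∈ F, rate3 β q ω := le_iInf₂ fun ω _ => rate_nonneg ω
      have hJbot : (⨅ ω ∈ F, rate3 β q ω) ≠ ⊥ := by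
        intro h; rw [h] at hJ0; simp at hJ0
      set J : ℝ := (⨅ ω ∈ F, rate3 β q ω).toReal with hJdef
      have hJcoe : ((J:ℝ):EReal) = ⨅ ω ∈ F, rate3 β q ω := EReal.coe_toReal hJtop hJbot
      have hKJ : ∀ n s, 0 < n → s ≤ n → nuvec n s ∈ F → J ≤ Kf p ((s:ℝ)/n) := by
        intro n s hn hs hmem
        have h1 : (⨅ ω ∈ F, rate3 β q ω) ≤ rate3 β q (nuvec n s) := iInf₂_le _ hmem
        rw [rate_eq _ (nuvec_prob hn hs)] at h1
        rw [← hJcoe] at h1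
        have hnt : nuvec n s true = (s:ℝ)/n := if_pos rfl
        rw [hnt] at h1
        exact EReal.coe_le_coe_iff.mp h1
      have hvten : Tendsto (fun n : ℕ => Real.log ((n:ℝ)+1)/n + del p (μ n) - J) atTop
          (nhds (-J)) := by
        have := (hlogdiv.add hδ).sub (tendsto_const_nhds (x := J))
        simpa using this
      have hevb : ∀ᶠ n : ℕ in atTop,
          (((n:ℝ)⁻¹ : ℝ) : EReal) *
            elog (∑ x : Fin n → Bool, F.indicator (fun _ => bernWeight n (μ n) x) (empInd n x))
            ≤ ((Real.log ((n:ℝ)+1)/n + del p (μ n) - J : ℝ) : EReal) := by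
        filter_upwards [eventually_gt_atTop 0, hμIoo] with n hn hμn
        have hn' : (0:ℝ) < n := by exact_mod_cast hn
        rw [sum_reduce]
        have hsum_le : (∑ s ∈ Finset.range (n+1), F.indicator (fun _ => wB (μ n) n s) (nuvec n s))
            ≤ ((n:ℝ)+1) * Real.exp ((n:ℝ) * del p (μ n) - (n:ℝ)*J) := by
          have hterm : ∀ s ∈ Finset.range (n+1),
              F.indicator (fun _ => wB (μ n) n s) (nuvec n s)
                ≤ Real.exp ((n:ℝ) * del p (μ n) - (n:ℝ)*J) := by
            intro s hsr
            have hs : s ≤ n := Nat.lt_succ_iff.mp (Finset.mem_range.mp hsr)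
            by_cases hmem : nuvec n s ∈ F
            · rw [Set.indicator_of_mem hmem]
              have hw := wB_pos hμn.1 (by exact hμn.2) hs (μ := μ n)
              have hlog := log_wB_le (p := p) hμn.1 hμn.2 hn hs
              have hK := hKJ n s hn hs hmem
              rw [← Real.exp_log hw]
              apply Real.exp_le_exp.mpr
              nlinarith
            · rw [Set.indicator_of_notMem hmem]; positivity
          calc (∑ s ∈ Finset.range (n+1), F.indicator (fun _ => wB (μ n) n s) (nuvec n s))
              ≤ ∑ _s ∈ Finset.range (n+1), Real.exp ((n:ℝ) * del p (μ n) - (n:ℝ)*J) :=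
                Finset.sum_le_sum hterm
            _ = ((n:ℝ)+1) * Real.exp ((n:ℝ) * del p (μ n) - (n:ℝ)*J) := by
                rw [Finset.sum_const, Finset.card_range, nsmul_eq_mul]
                push_cast; ring
        have hlogle : elog (∑ s ∈ Finset.range (n+1), F.indicator (fun _ => wB (μ n) n s) (nuvec n s))
            ≤ ((Real.log (((n:ℝ)+1) * Real.exp ((n:ℝ) * del p (μ n) - (n:ℝ)*J)) : ℝ) : EReal) := by
          calc elog (∑ s ∈ Finset.range (n+1), F.indicator (fun _ => wB (μ n) n s) (nuvec n s))
              ≤ elog (((n:ℝ)+1) * Real.exp ((n:ℝ) * del p (μ n) - (n:ℝ)*J)) := elog_mono hsum_le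
            _ = _ := elog_of_pos (by positivity)
        refine le_trans (coe_mul_le (inv_pos.mpr hn') hlogle) ?_
        apply EReal.coe_le_coe_iff.mpr
        rw [Real.log_mul (by positivity) (Real.exp_ne_zero _), Real.log_exp]
        apply le_of_eq
        field_simp
        ring
      have hlim : Filter.limsup
          (fun n : ℕ => ((Real.log ((n:ℝ)+1)/n + del p (μ n) - J : ℝ) : EReal)) atTop
          = ((-J : ℝ) : EReal) := (EReal.tendsto_coe.mpr hvten).limsup_eq
      calc Filter.limsup (fun n : ℕ => (((n:ℝ)⁻¹ : ℝ) : EReal) *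
            elog (∑ x : Fin n → Bool, F.indicator (fun _ => bernWeight n (μ n) x) (empInd n x)))
            atTop
          ≤ Filter.limsup
            (fun n : ℕ => ((Real.log ((n:ℝ)+1)/n + del p (μ n) - J : ℝ) : EReal)) atTop :=
            Filter.limsup_le_limsup hevb
        _ = ((-J : ℝ) : EReal) := hlim
        _ = -(⨅ ω ∈ F, rate3 β q ω) := by rw [EReal.coe_neg, hJcoe]

  case lower =>
    intro G hG
    rw [EReal.neg_le]
    apply le_iInf₂
    intro ω hωG
    rw [EReal.neg_le]
    by_cases hprob : IsProbVec ω
    · rw [rate_eq ω hprob, ← EReal.coe_neg]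
      obtain ⟨ht0, ht1⟩ := mem_Icc_of_prob ω hprob
      set t := ω true with htdef
      set sq : ℕ → ℕ := fun n => ⌊t * n⌋₊ with hsq
      have hsle : ∀ n : ℕ, sq n ≤ n := by
        intro n
        have h1 : t * n ≤ (n:ℝ) := by nlinarith [Nat.cast_nonneg (α := ℝ) n]
        calc sq n ≤ ⌊(n:ℝ)⌋₊ := Nat.floor_mono h1
          _ = n := Nat.floor_natCast n
      have hsn : Tendsto (fun n : ℕ => (sq n : ℝ)/n) atTop (nhds t) := by
        apply tendsto_of_tendsto_of_tendsto_of_le_of_le' (g := fun n : ℕ => t - 1/(n:ℝ))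
          (h := fun _ : ℕ => t)
        · have h2 : Tendsto (fun n : ℕ => t - 1/(n:ℝ)) atTop (nhds (t - 0)) :=
            tendsto_const_nhds.sub tendsto_one_div_atTop_nhds_zero_nat
          simpa using h2
        · exact tendsto_const_nhds
        · filter_upwards [eventually_gt_atTop 0] with n hn
          have hn' : (0:ℝ) < n := by exact_mod_cast hn
          have h2 : t * n - 1 < (sq n : ℝ) := Nat.sub_one_lt_floor (t * n)
          rw [le_div_iff₀ hn']
          have he : (t - 1/(n:ℝ))*n = t*n - 1 := by field_simp
          rw [he]
          linarith
        · filter_upwards [eventually_gt_atTop 0] with n hn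
          have hn' : (0:ℝ) < n := by exact_mod_cast hn
          rw [div_le_iff₀ hn']
          exact Nat.floor_le (by positivity)
      have hνt : Tendsto (fun n : ℕ => nuvec n (sq n)) atTop (nhds ω) := by
        rw [tendsto_pi_nhds]
        intro a
        cases a
        · have hωf : ω false = 1 - t := by have := hprob.2; linarith
          have hgoal : Tendsto (fun n : ℕ => 1 - (sq n:ℝ)/n) atTop (nhds (ω false)) := by
            rw [hωf]; exact tendsto_const_nhds.sub hsn
          apply hgoal.congr'
          filter_upwards [eventually_gt_atTop 0] with n hn
          have hn' : (0:ℝ) < n := by exact_mod_cast hn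
          show 1 - (sq n:ℝ)/n = nuvec n (sq n) false
          have hnf : nuvec n (sq n) false = ((n - sq n:ℕ):ℝ)/n := if_neg (by simp)
          rw [hnf, Nat.cast_sub (hsle n)]
          field_simp
        · have hne : (fun n : ℕ => nuvec n (sq n) true) = fun n : ℕ => (sq n:ℝ)/n := by
            funext n; exact if_pos rfl
          rw [hne]
          exact hsn
      have hmemG : ∀ᶠ n : ℕ in atTop, nuvec n (sq n) ∈ G :=
        hνt.eventually_mem (hG.mem_nhds hωG)
      have hKt : Tendsto (fun n : ℕ => Kf p ((sq n:ℝ)/n)) atTop (nhds (Kf p t)) :=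
        ((Kf_cont p).tendsto t).comp hsn
      have hvten : Tendsto
          (fun n : ℕ => -Kf p ((sq n:ℝ)/n) - del p (μ n) - Real.log ((n:ℝ)+1)/n) atTop
          (nhds (-Kf p t)) := by
        have h3 := (hKt.neg.sub hδ).sub hlogdiv
        simpa using h3
      have hevb : ∀ᶠ n : ℕ in atTop,
          ((-Kf p ((sq n:ℝ)/n) - del p (μ n) - Real.log ((n:ℝ)+1)/n : ℝ) : EReal)
            ≤ (((n:ℝ)⁻¹ : ℝ) : EReal) *
              elog (∑ x : Fin n → Bool, G.indicator (fun _ => bernWeight n (μ n) x) (empInd n x)) := by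
        filter_upwards [eventually_gt_atTop 0, hμIoo, hmemG] with n hn hμn hmem
        have hn' : (0:ℝ) < n := by exact_mod_cast hn
        rw [sum_reduce]
        set S := ∑ s ∈ Finset.range (n+1), G.indicator (fun _ => wB (μ n) n s) (nuvec n s) with hS
        have hwpos : 0 < wB (μ n) n (sq n) := wB_pos hμn.1 hμn.2 (hsle n)
        have hwle : wB (μ n) n (sq n) ≤ S := by
          rw [hS]
          have h4 := Finset.single_le_sum
            (f := fun s => G.indicator (fun _ => wB (μ n) n s) (nuvec n s))
            (fun s _ => Set.indicator_nonneg (fun _ _ => wB_nonneg hμn.1.le hμn.2.le n s) _)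
            (Finset.mem_range.mpr (Nat.lt_succ_of_le (hsle n)))
          exact le_trans (le_of_eq (Set.indicator_of_mem hmem
            (fun _ => wB (μ n) n (sq n))).symm) h4
        have hSpos : 0 < S := lt_of_lt_of_le hwpos hwle
        rw [elog_of_pos hSpos, ← EReal.coe_mul]
        apply EReal.coe_le_coe_iff.mpr
        have hlw := log_wB_ge (p := p) hμn.1 hμn.2 hn (hsle n)
        have hls : Real.log (wB (μ n) n (sq n)) ≤ Real.log S := Real.log_le_log hwpos hwle
        have hfinal : -(n:ℝ) * del p (μ n) - (n:ℝ) * Kf p ((sq n:ℝ)/n) - Real.log ((n:ℝ)+1)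
            ≤ Real.log S := by linarith
        have h5 := mul_le_mul_of_nonneg_left hfinal (le_of_lt (inv_pos.mpr hn'))
        calc (-Kf p ((sq n:ℝ)/n) - del p (μ n) - Real.log ((n:ℝ)+1)/n)
            = (n:ℝ)⁻¹ * (-(n:ℝ) * del p (μ n) - (n:ℝ) * Kf p ((sq n:ℝ)/n) - Real.log ((n:ℝ)+1)) := by
              field_simp; ring
          _ ≤ (n:ℝ)⁻¹ * Real.log S := h5
      calc ((-Kf p t : ℝ) : EReal)
          = Filter.liminf (fun n : ℕ =>
              ((-Kf p ((sq n:ℝ)/n) - del p (μ n) - Real.log ((n:ℝ)+1)/n : ℝ) : EReal)) atTop :=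
            ((EReal.tendsto_coe.mpr hvten).liminf_eq).symm
        _ ≤ Filter.liminf (fun n : ℕ => (((n:ℝ)⁻¹ : ℝ) : EReal) *
              elog (∑ x : Fin n → Bool, G.indicator (fun _ => bernWeight n (μ n) x) (empInd n x)))
              atTop := Filter.liminf_le_liminf hevb
    · rw [rate_top ω hprob, EReal.neg_top]
      exact bot_le


end Pooling
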